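/- Let m ∈ ℕ and let T be a tournament (on an arbitrary vertex set). Then i(T) ≤ m if and only if every finite induced subtournament of T has inversion index at most m. -/

import Mathlib

/-- A tournament on a vertex set `V`: a loopless directed graph such that for all
distinct `x, y` exactly one of `(x,y)`, `(y,x)` is an arc. -/
structure Tournament (V : Type*) where
  rel : V → V → Prop
  irrefl : ∀ x, ¬ rel x x
  total : ∀ x y, x ≠ y → rel x y ∨ rel y x
  asymm : ∀ x y, rel x y → ¬ rel y x

namespace Tournament

variable {V : Type*} {W : Type*}

/-- The tournament obtained from `T` by reversing all arcs both of whose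
endpoints lie in `X`. -/
def inv (T : Tournament V) (X : Set V) : Tournament V where
  rel x y := (x ∈ X ∧ y ∈ X ∧ T.rel y x) ∨ ((x ∉ X ∨ y ∉ X) ∧ T.rel x y)
  irrefl x := by have := T.irrefl x; tauto
  total x y hxy := by
    have := T.total x y hxy
    by_cases hx : x ∈ X <;> by_cases hy : y ∈ X <;> tauto
  asymm x y := by have h1 := T.asymm x y; have h2 := T.asymm y x; tauto

/-- Successive inversions along a finite sequence of subsets (`X_0` first). -/
def invSeq (T : Tournament V) (Xs : List (Set V)) : Tournament V :=
  Xs.foldl Tournament.inv T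

/-- A tournament is acyclic (transitive) when its arc relation is transitive,
i.e. a strict linear order. -/
def IsAcyclic (T : Tournament V) : Prop :=
  ∀ x y z, T.rel x y → T.rel y z → T.rel x z

/-- The inversion index: the least number of subsets to be inverted to reach an
acyclic tournament. -/
noncomputable def index (T : Tournament V) : ℕ :=
  sInf {m | ∃ Xs : List (Set V), Xs.length = m ∧ (T.invSeq Xs).IsAcyclic}

/-- Induced subtournament on a set of vertices. -/
def restrict (T : Tournament V) (A : Set V) : Tournament A where
  rel x y := T.rel x y
  irrefl x := T.irrefl x
  total x y hxy := T.total x y (fun h => hxy (Subtype.ext h))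
  asymm x y := T.asymm x y

/-- `T − x`: the subtournament induced on `V ∖ {x}`. -/
def erase (T : Tournament V) (x : V) : Tournament {y : V // y ≠ x} :=
  T.restrict {y | y ≠ x}

/-- `S` embeds into `T`: `S` is isomorphic to the subtournament of `T` induced on
some subset of the vertices of `T`. -/
def Embeds (S : Tournament V) (T : Tournament W) : Prop :=
  ∃ f : V → W, Function.Injective f ∧ ∀ x y, S.rel x y ↔ T.rel (f x) (f y)

/-- Isomorphism of tournaments. -/
def Iso (S : Tournament V) (T : Tournament W) : Prop :=
  ∃ e : V ≃ W, ∀ x y, S.rel x y ↔ T.rel (e x) (e y)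

/-- The dual tournament, obtained by reversing all arcs. -/
def dual (T : Tournament V) : Tournament V where
  rel x y := T.rel y x
  irrefl x := T.irrefl x
  total x y hxy := (T.total x y hxy).symm
  asymm x y h := T.asymm y x h

/-- `X` is an interval of `T`. -/
def IsInterval (T : Tournament V) (X : Set V) : Prop :=
  ∀ y ∉ X, (∀ x ∈ X, T.rel x y) ∨ (∀ x ∈ X, T.rel y x)

/-- A tournament is indecomposable when all its intervals are trivial. -/
def Indecomposable (T : Tournament V) : Prop :=
  ∀ X : Set V, T.IsInterval X → X = ∅ ∨ X = Set.univ ∨ ∃ x, X = {x}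

end Tournament

/-- The transitive tournament `n̲` on `{0, …, n−1}`, with arcs `(i,j)` for `i < j`. -/
def linear (n : ℕ) : Tournament (Fin n) where
  rel x y := x < y
  irrefl x := lt_irrefl x
  total _ _ h := h.lt_or_gt
  asymm _ _ h := lt_asymm h

/-- `2ℕ_{<k} = {0, 2, …, 2(k−1)}` as a subset of `Fin N`. -/
def evensLT {N : ℕ} (k : ℕ) : Set (Fin N) := {i | (i : ℕ) % 2 = 0 ∧ (i : ℕ) < 2 * k}

/-- `2ℕ_{<k}+1 = {1, 3, …, 2k−1}` as a subset of `Fin N`. -/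
def oddsLT {N : ℕ} (k : ℕ) : Set (Fin N) := {i | (i : ℕ) % 2 = 1 ∧ (i : ℕ) < 2 * k}

namespace Tournament

/-- The inversion index with values in `ℕ∞`: it is `⊤` (infinite) when no finite
sequence of inversions makes the tournament acyclic. -/
noncomputable def indexE {V : Type*} (T : Tournament V) : ℕ∞ :=
  sInf {n : ℕ∞ | ∃ Xs : List (Set V), (Xs.length : ℕ∞) = n ∧ (T.invSeq Xs).IsAcyclic}

end Tournament

namespace Tournament

variable {V : Type*} {W : Type*}

-- AUX

theorem ext' {S T : Tournament V} (h : ∀ x y, S.rel x y ↔ T.rel x y) : S = T := by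
  cases S; cases T
  have : ∀ (r r' : V → V → Prop) i1 t1 a1 i2 t2 a2, r = r' →
      Tournament.mk r i1 t1 a1 = Tournament.mk r' i2 t2 a2 := by
    rintro r r' _ _ _ _ _ _ rfl; rfl
  exact this _ _ _ _ _ _ _ _ (funext fun x => funext fun y => propext (h x y))

theorem inv_empty (T : Tournament V) : T.inv ∅ = T := by
  apply ext'; intro x y; simp [inv]

theorem invSeq_nil (T : Tournament V) : T.invSeq [] = T := rfl

theorem invSeq_cons (T : Tournament V) (X : Set V) (Xs : List (Set V)) :
    T.invSeq (X :: Xs) = (T.inv X).invSeq Xs := rfl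

theorem invSeq_append (T : Tournament V) (Xs Ys : List (Set V)) :
    T.invSeq (Xs ++ Ys) = (T.invSeq Xs).invSeq Ys := by
  simp [invSeq, List.foldl_append]

theorem invSeq_replicate_empty (T : Tournament V) (k : ℕ) :
    T.invSeq (List.replicate k ∅) = T := by
  induction k with
  | zero => rfl
  | succ k ih => rw [List.replicate_succ, invSeq_cons, inv_empty, ih]

open Classical in
theorem invSeq_rel (T : Tournament V) (Xs : List (Set V)) (x y : V) :
    (T.invSeq Xs).rel x y ↔
      if Even (Xs.countP fun X => decide (x ∈ X ∧ y ∈ X)) then T.rel x y else T.rel y x := by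
  induction Xs generalizing T with
  | nil => simp [invSeq]
  | cons X Xs ih =>
    rw [invSeq_cons, ih, List.countP_cons]
    by_cases h : x ∈ X ∧ y ∈ X
    · have hrel1 : (T.inv X).rel x y ↔ T.rel y x := by simp only [inv]; tauto
      have hrel2 : (T.inv X).rel y x ↔ T.rel x y := by simp only [inv]; tauto
      by_cases hc : Even (Xs.countP fun X => decide (x ∈ X ∧ y ∈ X)) <;>
        [skip; skip] <;> simp only [Bool.decide_and] at hc <;>
        simp [h, hc, hrel1, hrel2, Nat.even_add_one]
    · have hrel1 : (T.inv X).rel x y ↔ T.rel x y := by simp only [inv]; tauto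
      have hrel2 : (T.inv X).rel y x ↔ T.rel y x := by simp only [inv]; tauto
      by_cases hc : Even (Xs.countP fun X => decide (x ∈ X ∧ y ∈ X)) <;>
        [skip; skip] <;> simp only [Bool.decide_and] at hc <;>
        simp [h, hc, hrel1, hrel2, Nat.even_add_one]


/-- The list of `m` vertex sets encoded by a membership function `f`. -/
def setsOf {m : ℕ} (f : V → Fin m → Bool) : List (Set V) :=
  List.ofFn fun i => {v | f v i = true}

theorem setsOf_length {m : ℕ} (f : V → Fin m → Bool) : (setsOf f).length = m := by
  simp [setsOf]

open Classical in
/-- The relation obtained by twisting `T.rel x y` according to the parity of the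
number of common coordinates of the membership vectors `a`, `b`. -/
noncomputable def pRel (T : Tournament V) {m : ℕ} (a b : Fin m → Bool) (x y : V) : Prop :=
  if Even ((List.finRange m).countP fun i => a i && b i) then T.rel x y else T.rel y x

theorem invSeq_setsOf_rel (T : Tournament V) {m : ℕ} (f : V → Fin m → Bool) (x y : V) :
    (T.invSeq (setsOf f)).rel x y ↔ pRel T (f x) (f y) x y := by
  classical
  rw [invSeq_rel, pRel]
  have : (setsOf f).countP (fun X => decide (x ∈ X ∧ y ∈ X))
      = (List.finRange m).countP fun i => f x i && f y i := by
    rw [setsOf, List.ofFn_eq_map, List.countP_map]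
    apply List.countP_congr
    intro i _
    cases hx : f x i <;> cases hy : f y i <;>
      simp [Function.comp, Set.mem_setOf_eq, hx, hy]
  rw [this]

theorem pRel_compat {W : Type*} (S : Tournament W) (T : Tournament V) (e : W → V)
    (he : ∀ x y, S.rel x y ↔ T.rel (e x) (e y)) {m : ℕ} (a b : Fin m → Bool) (x y : W) :
    pRel S a b x y ↔ pRel T a b (e x) (e y) := by
  unfold pRel; split_ifs <;> exact he _ _

theorem indexE_le_iff (T : Tournament V) (m : ℕ) :
    T.indexE ≤ (m : ℕ∞) ↔
      ∃ Xs : List (Set V), Xs.length = m ∧ (T.invSeq Xs).IsAcyclic := by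
  constructor
  · intro h
    have : ∃ n ∈ {n : ℕ∞ | ∃ Xs : List (Set V), (Xs.length : ℕ∞) = n ∧ (T.invSeq Xs).IsAcyclic},
        n ≤ (m : ℕ∞) := by
      by_contra hno
      push_neg at hno
      have h1 : ((m : ℕ∞) + 1) ≤ T.indexE := by
        apply le_sInf
        intro n hn
        exact Order.add_one_le_of_lt (hno n hn)
      have h2 := h1.trans h
      have h3 : (m : ℕ∞) < (m : ℕ∞) + 1 := by
        exact (ENat.lt_add_one_iff (by simp)).mpr le_rfl
      exact absurd h2 (not_le.mpr h3)
    obtain ⟨n, ⟨Xs, hlen, hac⟩, hle⟩ := this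
    rw [← hlen, Nat.cast_le] at hle
    refine ⟨Xs ++ List.replicate (m - Xs.length) ∅, by simp; omega, ?_⟩
    rwa [invSeq_append, invSeq_replicate_empty]
  · rintro ⟨Xs, hlen, hac⟩
    calc T.indexE ≤ (Xs.length : ℕ∞) := sInf_le ⟨Xs, rfl, hac⟩
    _ = (m : ℕ∞) := by rw [hlen]

theorem restrict_rel (T : Tournament V) (A : Set V) (x y : A) :
    (T.restrict A).rel x y ↔ T.rel x y := Iff.rfl

theorem isAcyclic_restrict {T : Tournament V} (h : T.IsAcyclic) (A : Set V) :
    (T.restrict A).IsAcyclic := fun x y z h1 h2 => h _ _ _ h1 h2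

theorem restrict_inv (T : Tournament V) (X : Set V) (A : Set V) :
    (T.inv X).restrict A = (T.restrict A).inv (Subtype.val ⁻¹' X) := by
  apply ext'; intro x y; exact Iff.rfl

theorem restrict_invSeq (T : Tournament V) (Xs : List (Set V)) (A : Set V) :
    (T.invSeq Xs).restrict A = (T.restrict A).invSeq (Xs.map (Subtype.val ⁻¹' ·)) := by
  induction Xs generalizing T with
  | nil => rfl
  | cons X Xs ih => rw [invSeq_cons, ih, List.map_cons, invSeq_cons, restrict_inv]

end Tournament

namespace Tournament

theorem isAcyclic_invSeq_setsOf_comp {V W : Type*} (S : Tournament W) (T : Tournament V)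
    (e : W → V) (he : ∀ x y, S.rel x y ↔ T.rel (e x) (e y)) {m : ℕ} (f : V → Fin m → Bool)
    (h : (T.invSeq (setsOf f)).IsAcyclic) :
    (S.invSeq (setsOf (fun w => f (e w)))).IsAcyclic := by
  intro x y z h1 h2
  rw [invSeq_setsOf_rel] at h1 h2 ⊢
  rw [pRel_compat S T e he] at h1 h2 ⊢
  have := h (e x) (e y) (e z)
  rw [invSeq_setsOf_rel, invSeq_setsOf_rel, invSeq_setsOf_rel] at this
  exact this h1 h2

open CategoryTheory Opposite in
/-- The inverse system of "good colourings" of finite subsets of the vertex set. -/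
noncomputable def invSys {V : Type*} (T : Tournament V) (m : ℕ) : (Finset V)ᵒᵖ ⥤ Type _ where
  obj A := {g : (↑(unop A) : Set V) → Fin m → Bool //
    ((T.restrict ↑(unop A)).invSeq (setsOf g)).IsAcyclic}
  map {A B} h := TypeCat.ofHom fun (g : {g : (↑(unop A) : Set V) → Fin m → Bool //
    ((T.restrict ↑(unop A)).invSeq (setsOf g)).IsAcyclic}) =>
      ⟨fun (x : (↑(unop B) : Set V)) => g.1 ⟨x.1, leOfHom h.unop x.2⟩,
    isAcyclic_invSeq_setsOf_comp _ _ (fun (x : (↑(unop B) : Set V)) => ⟨x.1, leOfHom h.unop x.2⟩)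
      (fun _ _ => Iff.rfl) g.1 g.2⟩
  map_id A := rfl
  map_comp h1 h2 := rfl

attribute [reducible] invSys

end Tournament

open CategoryTheory Opposite Tournament in
theorem indexE_le_iff_finite_subtournaments_helper {V : Type*} (T : Tournament V) (m : ℕ) :
    T.indexE ≤ (m : ℕ∞) ↔
      ∀ A : Set V, A.Finite → (T.restrict A).indexE ≤ (m : ℕ∞) := by
  classical
  constructor
  · intro h A _
    obtain ⟨Xs, hlen, hac⟩ := (indexE_le_iff T m).mp h
    refine (indexE_le_iff _ m).mpr ⟨Xs.map (Subtype.val ⁻¹' ·), by simp [hlen], ?_⟩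
    rw [← restrict_invSeq]
    exact isAcyclic_restrict hac A
  · intro hA
    haveI hFin : ∀ A : (Finset V)ᵒᵖ, Finite ((invSys T m).obj A) := fun A => Subtype.finite
    haveI hNe : ∀ A : (Finset V)ᵒᵖ, Nonempty ((invSys T m).obj A) := by
      intro A
      obtain ⟨Xs, hlen, hac⟩ :=
        (indexE_le_iff _ m).mp (hA (↑(unop A)) (unop A).finite_toSet)
      have hgs : setsOf (fun (a : (↑(unop A) : Set V)) (i : Fin m) =>
          decide (a ∈ Xs.get ⟨i.1, by rw [hlen]; exact i.2⟩)) = Xs := by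
        apply List.ext_getElem (by simp [setsOf, hlen])
        intro n h1 h2
        simp only [setsOf] at h1
        simp only [setsOf, List.getElem_ofFn]
        ext v
        simp [List.get_eq_getElem]
      exact ⟨⟨_, by rw [hgs]; exact hac⟩⟩
    obtain ⟨u, hu⟩ := nonempty_sections_of_finite_inverse_system (invSys T m)
    set f : V → Fin m → Bool := fun v => (u (op {v})).1 ⟨v, by simp⟩ with hf
    have hfg : ∀ (A : Finset V) (v : V) (hv : v ∈ A), f v = (u (op A)).1 ⟨v, hv⟩ := by
      intro A v hv
      have hle : ({v} : Finset V) ≤ A := by simp [Finset.singleton_subset_iff, hv]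
      have h2 := hu ((homOfLE hle).op : op A ⟶ op ({v} : Finset V))
      calc f v = (u (op ({v} : Finset V))).1 ⟨v, by simp⟩ := rfl
        _ = ((invSys T m).map ((homOfLE hle).op) (u (op A))).1 ⟨v, by simp⟩ := by rw [h2]
        _ = (u (op A)).1 ⟨v, hv⟩ := rfl
    refine (indexE_le_iff T m).mpr ⟨setsOf f, setsOf_length f, ?_⟩
    intro x y z h1 h2
    set A : Finset V := {x, y, z} with hA'
    have hx : x ∈ A := by simp [hA']
    have hy : y ∈ A := by simp [hA']
    have hz : z ∈ A := by simp [hA']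
    have key : ∀ (a b : V) (ha : a ∈ A) (hb : b ∈ A),
        ((T.invSeq (setsOf f)).rel a b ↔
          ((T.restrict ↑A).invSeq (setsOf (u (op A)).1)).rel ⟨a, ha⟩ ⟨b, hb⟩) := by
      intro a b ha hb
      rw [invSeq_setsOf_rel, invSeq_setsOf_rel, hfg A a ha, hfg A b hb]
      exact Iff.symm (pRel_compat (T.restrict ↑A) T Subtype.val (fun _ _ => Iff.rfl)
        ((u (op A)).1 ⟨a, ha⟩) ((u (op A)).1 ⟨b, hb⟩) ⟨a, ha⟩ ⟨b, hb⟩)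
    rw [key x y hx hy] at h1
    rw [key y z hy hz] at h2
    exact (key x z hx hz).mpr ((u (op A)).2 _ _ _ h1 h2)


/-- a tournament (on an arbitrary vertex set) has inversion index at
most `m` if and only if every finite induced subtournament has inversion index at
most `m`. -/
theorem indexE_le_iff_finite_subtournaments {V : Type*} (T : Tournament V) (m : ℕ) :
    T.indexE ≤ (m : ℕ∞) ↔
      ∀ A : Set V, A.Finite → (T.restrict A).indexE ≤ (m : ℕ∞) :=
  indexE_le_iff_finite_subtournaments_helper T m
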